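/- Let L_i ⊆ A_i* be languages for i = 1,…,n, let A = ∪_{i=1}^n A_i, and let A_k ⊆ A satisfy ∪_{1≤i,j≤n, i≠j}(A_i ∩ A_j) ⊆ A_k. Let P_k : A* → A_k* be the natural projection and, for each i, let Q_i : A_i* → (A_i ∩ A_k)* be the natural projection. Then P_k(‖_{i=1}^n L_i) = ‖_{i=1}^n Q_i(L_i). -/

import Mathlib

variable {α : Type*}

/-- The natural projection onto subalphabet `B`: erases events not in `B`. -/
noncomputable def proj (B : Set α) (w : List α) : List α :=
  w.filter fun a => @decide (a ∈ B) (Classical.propDecidable _)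

/-- Words over alphabet `A`. -/
def Words (A : Set α) : Set (List α) := {w | ∀ a ∈ w, a ∈ A}

/-- Synchronous product of a family of languages `M i` over alphabets `B i`:
`‖_i M i = ⋂_i P_{B i}⁻¹ (M i)`, a language over `⋃ i, B i`. -/
def SyncProd {ι : Type*} (B : ι → Set α) (M : ι → Set (List α)) : Set (List α) :=
  {w | w ∈ Words (⋃ i, B i) ∧ ∀ i, proj (B i) w ∈ M i}

/-- Binary synchronous product of `M₁` over `B₁` and `M₂` over `B₂`. -/
def sync2 (B₁ B₂ : Set α) (M₁ M₂ : Set (List α)) : Set (List α) :=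
  {w | w ∈ Words (B₁ ∪ B₂) ∧ proj B₁ w ∈ M₁ ∧ proj B₂ w ∈ M₂}

/-- `K` is controllable with respect to `L` and uncontrollable events `Au`:
`K·Au ∩ L ⊆ K`. -/
def Controllable (K L : Set (List α)) (Au : Set α) : Prop :=
  ∀ s ∈ K, ∀ a ∈ Au, s ++ [a] ∈ L → s ++ [a] ∈ K

def PrefixClosed (L : Set (List α)) : Prop :=
  ∀ w ∈ L, ∀ v : List α, v <+: w → v ∈ L

/-- The projection onto `B` is an `L`-observer. -/
def IsObserver (B : Set α) (L : Set (List α)) : Prop :=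
  ∀ t ∈ proj B '' L, ∀ s ∈ L, proj B s <+: t →
    ∃ u : List α, s ++ u ∈ L ∧ proj B (s ++ u) = t

/-- The projection onto `Ao` is output control consistent (OCC) for `L`
(with uncontrollable events `Au`). -/
def OCC (Ao Au : Set α) (L : Set (List α)) : Prop :=
  ∀ s ∈ L, ∀ (mid : List α) (σk : α), σk ∈ Ao → (∀ a ∈ mid, a ∉ Ao) →
    (s = mid ++ [σk] ∨
      ∃ (s' : List α) (σ' : α), σ' ∈ Ao ∧ s = s' ++ σ' :: (mid ++ [σk])) →
    σk ∈ Au → ∀ a ∈ mid, a ∈ Au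

/-- Supremal controllable sublanguage of `K` w.r.t. `L` and `Au`:
the union of all sublanguages of `K` controllable w.r.t. `L` and `Au`. -/
def supC (K L : Set (List α)) (Au : Set α) : Set (List α) :=
  ⋃₀ {M | M ⊆ K ∧ Controllable M L Au}

/-- C&P coobservability of `K'` w.r.t. plant `L`, observation alphabets `Bo i`
and local controllable alphabets `Bc i`. -/
def Coobservable {ι : Type*} (Bo Bc : ι → Set α) (L K' : Set (List α)) : Prop :=
  ∀ s ∈ K', ∀ a ∈ ⋃ i, Bc i, s ++ [a] ∈ L → s ++ [a] ∉ K' →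
    ∃ i, a ∈ Bc i ∧
      ∀ s' ∈ Words (⋃ j, Bo j), proj (Bo i) s' = proj (Bo i) s → s' ++ [a] ∉ K'

/-- The closed-loop language of supervisor `S` over plant `M`:
the smallest language containing `ε` and closed under enabled extensions in `M`. -/
inductive InClosedLoop (S : List α → Set α) (M : Set (List α)) : List α → Prop
  | nil : InClosedLoop S M []
  | step {s : List α} {a : α} : InClosedLoop S M s → s ++ [a] ∈ M → a ∈ S s →
      InClosedLoop S M (s ++ [a])

def ClosedLoop (S : List α → Set α) (M : Set (List α)) : Set (List α) :=
  {w | InClosedLoop S M w}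

/-- A supervisor over alphabet `B` whose control patterns contain the
uncontrollable events `Bu` (i.e. `Bu ⊆ S s ⊆ B`). -/
def IsSupervisor (B Bu : Set α) (S : List α → Set α) : Prop :=
  ∀ s : List α, Bu ⊆ S s ∧ S s ⊆ B

/-- The coordinator language `L_k = ‖_{i=1}^n P_k (L i)` (each `P_k(L i)` being a
language over `A i ∩ Ak`). -/
def coordLang {n : ℕ} (A : Fin n → Set α) (Ak : Set α) (L : Fin n → Set (List α)) :
    Set (List α) :=
  SyncProd (fun i => A i ∩ Ak) (fun i => proj Ak '' L i)

/-- Two-level conditional controllability of `K` w.r.t. plants `L i` over `A i`,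
grouping `g`, group-coordinator alphabets `Akj j` (coordinators
`L_{k_j} = ‖_i P_{k_j}(L i)`), and uncontrollable events `Au`. -/
def TwoLevelCC {n m : ℕ} (A : Fin n → Set α) (g : Fin n → Fin m) (Akj : Fin m → Set α)
    (L : Fin n → Set (List α)) (Au : Set α) (K : Set (List α)) : Prop :=
  (∀ j : Fin m, Controllable (proj (Akj j) '' K) (coordLang A (Akj j) L) (Akj j ∩ Au)) ∧
  (∀ i : Fin n, Controllable (proj (A i ∪ Akj (g i)) '' K)
      (sync2 (A i) (Akj (g i)) (L i) (proj (Akj (g i)) '' K))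
      ((A i ∪ Akj (g i)) ∩ Au))

/-- `supC_{k_j}`. -/
def supCk {n : ℕ} (A : Fin n → Set α) (Akj : Set α) (L : Fin n → Set (List α))
    (Au : Set α) (K : Set (List α)) : Set (List α) :=
  supC (proj Akj '' K) (coordLang A Akj L) (Akj ∩ Au)

/-- `supC_{i+k_j}` (with `j = g i`). -/
def supCik {n m : ℕ} (A : Fin n → Set α) (g : Fin n → Fin m) (Akj : Fin m → Set α)
    (L : Fin n → Set (List α)) (Au : Set α) (K : Set (List α)) (i : Fin n) :
    Set (List α) :=
  supC (proj (A i ∪ Akj (g i)) '' K)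
    (sync2 (A i) (Akj (g i)) (L i) (supCk A (Akj (g i)) L Au K))
    ((A i ∪ Akj (g i)) ∩ Au)

/-- Two-level conditional decomposability of `K` w.r.t. `(A i)`, the high-level
coordinator alphabet `Ak` and the low-level coordinator alphabets `Akj j`. -/
def TwoLevelCD {n m : ℕ} (A : Fin n → Set α) (g : Fin n → Fin m) (Ak : Set α)
    (Akj : Fin m → Set α) (K : Set (List α)) : Prop :=
  K = SyncProd (fun r : Fin m => (⋃ i ∈ {i | g i = r}, A i) ∪ Ak)
        (fun r => proj ((⋃ i ∈ {i | g i = r}, A i) ∪ Ak) '' K) ∧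
  ∀ r : Fin m, proj ((⋃ i ∈ {i | g i = r}, A i) ∪ Ak) '' K =
    SyncProd (fun i : {i : Fin n // g i = r} => A i.1 ∪ Akj r)
      (fun i => proj (A i.1 ∪ Akj r) '' K)

/-- The supremal two-level conditionally controllable sublanguage of `K`. -/
def supTwoCC {n m : ℕ} (A : Fin n → Set α) (g : Fin n → Fin m) (Akj : Fin m → Set α)
    (L : Fin n → Set (List α)) (Au : Set α) (K : Set (List α)) : Set (List α) :=
  ⋃₀ {K' | K' ⊆ K ∧ PrefixClosed K' ∧ TwoLevelCC A g Akj L Au K'}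

attribute [local instance] Classical.propDecidable

private lemma proj_cons (B : Set α) (a : α) (w : List α) :
    proj B (a :: w) = if a ∈ B then a :: proj B w else proj B w := by
  by_cases h : a ∈ B <;> simp [proj, List.filter_cons, h]

private lemma proj_append (B : Set α) (u v : List α) :
    proj B (u ++ v) = proj B u ++ proj B v := List.filter_append _ _

private lemma proj_eq_self_of (B : Set α) {w : List α} (h : ∀ a ∈ w, a ∈ B) :
    proj B w = w := List.filter_eq_self.2 (by simpa using h)

private lemma proj_eq_nil_of (B : Set α) {w : List α} (h : ∀ a ∈ w, a ∉ B) :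
    proj B w = [] := List.filter_eq_nil_iff.2 (by simpa using h)

private lemma mem_proj {B : Set α} {w : List α} {a : α} :
    a ∈ proj B w ↔ a ∈ w ∧ a ∈ B := by simp [proj, List.mem_filter]

private lemma proj_proj {B C : Set α} (h : B ⊆ C) (w : List α) :
    proj B (proj C w) = proj B w := by
  induction w with
  | nil => rfl
  | cons a w ih =>
    by_cases hC : a ∈ C
    · by_cases hB : a ∈ B <;> simp [proj_cons, hC, hB, ih]
    · have hB : a ∉ B := fun hb => hC (h hb)
      simp [proj_cons, hC, hB, ih]

private lemma proj_flatten (B : Set α) (L : List (List α)) :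
    proj B L.flatten = (L.map (proj B)).flatten := by
  induction L with
  | nil => rfl
  | cons l L ih => simp [List.flatten, proj_append, ih]

private lemma flatten_map_single {β : Type*} [DecidableEq β] {l : List β}
    (hnd : l.Nodup) (f : β → List α) (i : β) (hi : i ∈ l)
    (h : ∀ j ∈ l, j ≠ i → f j = []) : (l.map f).flatten = f i := by
  induction l with
  | nil => simp at hi
  | cons a l ih =>
    rcases List.nodup_cons.1 hnd with ⟨hal, hnd'⟩
    by_cases hai : a = i
    · subst hai
      have : (l.map f).flatten = [] := by
        rw [List.flatten_eq_nil_iff]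
        intro x hx
        rcases List.mem_map.1 hx with ⟨j, hj, rfl⟩
        exact h j (List.mem_cons_of_mem _ hj) (fun hji => hal (hji ▸ hj))
      simp [this]
    · have : f a = [] := h a List.mem_cons_self hai
      have hi' : i ∈ l := by
        rcases List.mem_cons.1 hi with h1 | h1
        · exact absurd h1.symm hai
        · exact h1
      simp [this, ih hnd' hi' (fun j hj => h j (List.mem_cons_of_mem _ hj))]

private lemma core_lemma (n : ℕ) (A : Fin n → Set α) (Ak : Set α)
    (hsh : ∀ i j, i ≠ j → A i ∩ A j ⊆ Ak) :
    ∀ t : List α, (∀ a ∈ t, a ∈ Ak ∧ ∃ i, a ∈ A i) →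
    ∀ s : Fin n → List α, (∀ i, ∀ a ∈ s i, a ∈ A i) →
    (∀ i, proj (A i ∩ Ak) (s i) = proj (A i ∩ Ak) t) →
    ∃ w : List α, (∀ a ∈ w, ∃ i, a ∈ A i) ∧ proj Ak w = t ∧ ∀ i, proj (A i) w = s i := by
  intro t
  induction t with
  | nil =>
    intro _ s hsA hsproj
    -- no letter of any `s i` is in `Ak`
    have hnAk : ∀ i, ∀ a ∈ s i, a ∉ Ak := by
      intro i a ha hak
      have : a ∈ proj (A i ∩ Ak) (s i) := mem_proj.2 ⟨ha, hsA i a ha, hak⟩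
      rw [hsproj i] at this
      simp [proj] at this
    refine ⟨((List.finRange n).map s).flatten, ?_, ?_, ?_⟩
    · intro a ha
      rcases List.mem_flatten.1 ha with ⟨l, hl, hal⟩
      rcases List.mem_map.1 hl with ⟨j, _, rfl⟩
      exact ⟨j, hsA j a hal⟩
    · refine proj_eq_nil_of _ ?_
      intro a ha
      rcases List.mem_flatten.1 ha with ⟨l, hl, hal⟩
      rcases List.mem_map.1 hl with ⟨j, _, rfl⟩
      exact hnAk j a hal
    · intro i
      rw [proj_flatten, List.map_map]
      have := flatten_map_single (List.nodup_finRange n)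
        (fun j => proj (A i) (s j)) i (List.mem_finRange i) ?_
      · rw [show ((proj (A i)) ∘ s) = fun j => proj (A i) (s j) from rfl, this]
        exact proj_eq_self_of _ (hsA i)
      · intro j _ hji
        refine proj_eq_nil_of _ ?_
        intro a ha hai
        exact hnAk j a ha (hsh j i hji ⟨hsA j a ha, hai⟩)
  | cons b t' ih =>
    intro ht s hsA hsproj
    obtain ⟨hbAk, hbU⟩ := ht b List.mem_cons_self
    have ht' : ∀ a ∈ t', a ∈ Ak ∧ ∃ i, a ∈ A i := fun a ha =>
      ht a (List.mem_cons_of_mem _ ha)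
    have H : ∀ i, ∃ u r : List α,
        s i = u ++ ((if b ∈ A i then [b] else []) ++ r) ∧
        (∀ a ∈ u, a ∈ A i ∧ a ∉ Ak) ∧ (∀ a ∈ r, a ∈ A i) ∧
        proj (A i ∩ Ak) r = proj (A i ∩ Ak) t' := by
      intro i
      by_cases hbi : b ∈ A i
      · have hcons : proj (A i ∩ Ak) (s i) = b :: proj (A i ∩ Ak) t' := by
          rw [hsproj i, proj_cons, if_pos ⟨hbi, hbAk⟩]
        rw [proj] at hcons
        rcases List.filter_eq_cons_iff.1 hcons with ⟨l₁, l₂, heq, hl₁, _, hl₂⟩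
        refine ⟨l₁, l₂, by simpa [hbi] using heq, ?_, ?_, hl₂⟩
        · intro a ha
          have haA : a ∈ A i := hsA i a (heq ▸ (by simp [ha]))
          have : ¬ (a ∈ A i ∩ Ak) := by simpa using hl₁ a ha
          exact ⟨haA, fun hk => this ⟨haA, hk⟩⟩
        · intro a ha
          exact hsA i a (heq ▸ (by simp [ha]))
      · refine ⟨[], s i, by simp [hbi], by simp, hsA i, ?_⟩
        rw [hsproj i, proj_cons, if_neg (fun h => hbi h.1)]
    choose u r hsplit hu hrA hrproj using H
    obtain ⟨w', hw'U, hw'Ak, hw'A⟩ := ih ht' r hrA hrproj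
    refine ⟨((List.finRange n).map u).flatten ++ b :: w', ?_, ?_, ?_⟩
    · intro a ha
      rcases List.mem_append.1 ha with h | h
      · rcases List.mem_flatten.1 h with ⟨l, hl, hal⟩
        rcases List.mem_map.1 hl with ⟨j, _, rfl⟩
        exact ⟨j, (hu j a hal).1⟩
      · rcases List.mem_cons.1 h with rfl | h
        · exact hbU
        · exact hw'U a h
    · rw [proj_append, proj_cons, if_pos hbAk, hw'Ak]
      have : proj Ak ((List.finRange n).map u).flatten = [] := by
        refine proj_eq_nil_of _ ?_
        intro a ha
        rcases List.mem_flatten.1 ha with ⟨l, hl, hal⟩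
        rcases List.mem_map.1 hl with ⟨j, _, rfl⟩
        exact (hu j a hal).2
      rw [this]; rfl
    · intro i
      rw [proj_append, proj_cons, proj_flatten, List.map_map]
      have hflat := flatten_map_single (List.nodup_finRange n)
        (fun j => proj (A i) (u j)) i (List.mem_finRange i) ?_
      · rw [show ((proj (A i)) ∘ u) = fun j => proj (A i) (u j) from rfl, hflat]
        rw [proj_eq_self_of _ (fun a ha => (hu i a ha).1), hw'A i, hsplit i]
        by_cases hbi : b ∈ A i <;> simp [hbi]
      · intro j _ hji
        refine proj_eq_nil_of _ ?_
        intro a ha hai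
        exact (hu j a ha).2 (hsh j i hji ⟨(hu j a ha).1, hai⟩)

/-- If `Ak` contains all shared events, then
`P_k(‖ L i) = ‖ Q_i(L i)` where `Q_i` projects `(A i)*` onto `(A i ∩ Ak)*`. -/
theorem stmt_3 (n : ℕ) (A : Fin n → Set α) (Ak : Set α)
    (hsh : ∀ i j, i ≠ j → A i ∩ A j ⊆ Ak) (hAk : Ak ⊆ ⋃ i, A i)
    (L : Fin n → Set (List α)) (hLW : ∀ i, L i ⊆ Words (A i)) :
    proj Ak '' SyncProd A L =
      SyncProd (fun i => A i ∩ Ak) (fun i => proj (A i ∩ Ak) '' L i) := by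
  ext t
  constructor
  · rintro ⟨w, ⟨hwW, hwL⟩, rfl⟩
    constructor
    · intro a ha
      rcases mem_proj.1 ha with ⟨haw, haAk⟩
      rcases Set.mem_iUnion.1 (hwW a haw) with ⟨i, hi⟩
      exact Set.mem_iUnion.2 ⟨i, hi, haAk⟩
    · intro i
      have h1 : proj (A i ∩ Ak) (proj Ak w) = proj (A i ∩ Ak) w :=
        proj_proj (Set.inter_subset_right) w
      have h2 : proj (A i ∩ Ak) (proj (A i) w) = proj (A i ∩ Ak) w :=
        proj_proj (Set.inter_subset_left) w
      exact ⟨proj (A i) w, hwL i, h2.trans h1.symm⟩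
  · rintro ⟨htW, htL⟩
    choose s hsL hsproj using fun i => htL i
    have ht : ∀ a ∈ t, a ∈ Ak ∧ ∃ i, a ∈ A i := by
      intro a ha
      rcases Set.mem_iUnion.1 (htW a ha) with ⟨i, hiA, hiAk⟩
      exact ⟨hiAk, i, hiA⟩
    obtain ⟨w, hwU, hwAk, hwA⟩ := core_lemma n A Ak hsh t ht s
      (fun i a ha => hLW i (hsL i) a ha) hsproj
    refine ⟨w, ⟨?_, ?_⟩, hwAk⟩
    · intro a ha
      rcases hwU a ha with ⟨i, hi⟩
      exact Set.mem_iUnion.2 ⟨i, hi⟩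
    · intro i
      rw [hwA i]
      exact hsL i
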